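/- Let a ≥ 0 and let φ : ℝ → ℝ be a penalty function satisfying Assumption 1 with non-convexity parameter a. Then the function s : ℝ → ℝ defined by s(x) = φ(x) − |x| is twice continuously differentiable on all of ℝ, concave, and satisfies −a ≤ s″(x) ≤ 0 for all x ∈ ℝ. -/

import Mathlib

open Set Filter Topology

/-- Assumption 1: a sparsity-inducing penalty function `φ` with non-convexity
parameter `a ≥ 0`: `φ` is continuous on `ℝ`, twice continuously differentiable
on `ℝ \ {0}` and symmetric; `φ' > 0` and `φ'' ≤ 0` on `(0, ∞)`; the right
derivative of `φ` at `0` is `1`; and `inf_{x ≠ 0} φ''(x) = φ''(0⁺) = -a`. -/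
structure PenaltyAssumption (φ : ℝ → ℝ) (a : ℝ) : Prop where
  continuous : Continuous φ
  symm : ∀ x : ℝ, φ (-x) = φ x
  hasDerivAt : ∀ x : ℝ, x ≠ 0 → HasDerivAt φ (deriv φ x) x
  hasDerivAt2 : ∀ x : ℝ, x ≠ 0 → HasDerivAt (deriv φ) (deriv (deriv φ) x) x
  continuousOn_deriv2 : ContinuousOn (deriv (deriv φ)) {x : ℝ | x ≠ 0}
  deriv_pos : ∀ x : ℝ, 0 < x → 0 < deriv φ x
  deriv2_nonpos : ∀ x : ℝ, 0 < x → deriv (deriv φ) x ≤ 0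
  rightDeriv_zero_eq_one : HasDerivWithinAt φ 1 (Set.Ioi 0) 0
  isGLB_deriv2 : IsGLB (deriv (deriv φ) '' {x : ℝ | x ≠ 0}) (-a)
  tendsto_deriv2 : Filter.Tendsto (deriv (deriv φ)) (nhdsWithin 0 (Set.Ioi 0)) (nhds (-a))

/-- **Lemma 2.** If `φ` satisfies Assumption 1 with parameter `a`, then
`s(x) = φ(x) − |x|` is twice continuously differentiable on all of `ℝ`,
concave, and its second derivative satisfies `−a ≤ s″(x) ≤ 0`. -/
theorem penalty_sub_abs_contDiff_concave (a : ℝ) (ha : 0 ≤ a)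
    (φ : ℝ → ℝ) (hφ : PenaltyAssumption φ a) :
    ContDiff ℝ 2 (fun x : ℝ => φ x - |x|) ∧
    ConcaveOn ℝ Set.univ (fun x : ℝ => φ x - |x|) ∧
    ∀ x : ℝ, -a ≤ deriv (deriv (fun x : ℝ => φ x - |x|)) x ∧
      deriv (deriv (fun x : ℝ => φ x - |x|)) x ≤ 0 := by
  obtain ⟨hcont, hsymm, hD1, hD2, hC2, hpos, hnp, hright, hglb, htend⟩ := hφ
  set ψ := deriv φ with hψdef
  -- `ψ` is odd
  have hφeq : (fun x : ℝ => φ (-x)) = φ := funext hsymm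
  have hodd : ∀ x : ℝ, ψ x = -ψ (-x) := by
    intro x
    calc ψ x = deriv (fun y : ℝ => φ (-y)) x := by rw [hφeq]
    _ = -deriv φ (-x) := deriv_comp_neg φ x
  -- `deriv ψ` is even
  have heven : ∀ x : ℝ, deriv ψ x = deriv ψ (-x) := by
    intro x
    have h1 : ψ = fun y : ℝ => (fun t : ℝ => -ψ t) (-y) := funext hodd
    conv_lhs => rw [h1]
    rw [deriv_comp_neg (fun t : ℝ => -ψ t) x, deriv.fun_neg, neg_neg]
  -- lower and upper bounds on the second derivative away from 0
  have hlb : ∀ x : ℝ, x ≠ 0 → -a ≤ deriv ψ x := fun x hx => hglb.1 ⟨x, hx, rfl⟩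
  have hnp' : ∀ x : ℝ, x ≠ 0 → deriv ψ x ≤ 0 := by
    intro x hx
    rcases hx.lt_or_gt with h | h
    · rw [heven x]; exact hnp (-x) (by linarith)
    · exact hnp x h
  -- `ψ` is antitone on `(0, ∞)`
  have hψcontOn : ContinuousOn ψ (Ioi (0 : ℝ)) := fun y hy =>
    ((hD2 y (ne_of_gt hy)).differentiableAt.continuousAt).continuousWithinAt
  have hψdiffOn : DifferentiableOn ℝ ψ (interior (Ioi (0 : ℝ))) := by
    rw [interior_Ioi]
    exact fun y hy => (hD2 y (ne_of_gt hy)).differentiableAt.differentiableWithinAt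
  have hanti : AntitoneOn ψ (Ioi (0 : ℝ)) := by
    apply antitoneOn_of_deriv_nonpos (convex_Ioi 0) hψcontOn hψdiffOn
    rw [interior_Ioi]
    exact fun y hy => hnp y hy
  -- `ψ x + a x` is monotone on `(0, ∞)`
  have hmonDeriv : ∀ y : ℝ, y ≠ 0 →
      HasDerivAt (fun x : ℝ => ψ x + a * x) (deriv ψ y + a * 1) y := fun y hy =>
    (hD2 y hy).add ((hasDerivAt_id y).const_mul a)
  have hmon : MonotoneOn (fun x : ℝ => ψ x + a * x) (Ioi (0 : ℝ)) := by
    apply monotoneOn_of_deriv_nonneg (convex_Ioi 0)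
    · exact hψcontOn.add (continuous_const.mul continuous_id).continuousOn
    · rw [interior_Ioi]
      exact fun y hy => (hmonDeriv y (ne_of_gt hy)).differentiableAt.differentiableWithinAt
    · rw [interior_Ioi]
      intro y hy
      rw [(hmonDeriv y (ne_of_gt hy)).deriv]
      have := hlb y (ne_of_gt hy)
      linarith
  -- `ψ` is bounded above on `(0, ∞)`
  have hbdd : BddAbove (ψ '' Ioi (0 : ℝ)) := by
    refine ⟨ψ 1 + a, ?_⟩
    rintro _ ⟨x, hx, rfl⟩
    rcases le_or_gt x 1 with h | h
    · have h2 := hmon hx (by norm_num : (1:ℝ) ∈ Ioi (0:ℝ)) h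
      have h3 : 0 ≤ a * x := mul_nonneg ha (le_of_lt hx)
      simp only [mul_one] at h2
      linarith
    · have h2 := hanti (by norm_num : (1:ℝ) ∈ Ioi (0:ℝ)) hx h.le
      linarith
  -- `ψ` tends to some limit `L` at `0⁺`, and `L = 1`
  set L := sSup (ψ '' Ioi (0 : ℝ)) with hLdef
  have hlimL : Tendsto ψ (𝓝[>] (0:ℝ)) (𝓝 L) := hanti.tendsto_nhdsGT hbdd
  have hL1 : L = 1 := by
    have hdiffOn : DifferentiableOn ℝ φ (Ioi (0 : ℝ)) := fun y hy =>
      (hD1 y (ne_of_gt hy)).differentiableAt.differentiableWithinAt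
    have hIci : HasDerivWithinAt φ L (Ici (0:ℝ)) 0 :=
      hasDerivWithinAt_Ici_of_tendsto_deriv hdiffOn hcont.continuousWithinAt
        self_mem_nhdsWithin hlimL
    have h1 : derivWithin φ (Ioi (0:ℝ)) 0 = 1 := hright.derivWithin (uniqueDiffWithinAt_Ioi 0)
    have h2 : derivWithin φ (Ioi (0:ℝ)) 0 = L :=
      (hIci.mono Ioi_subset_Ici_self).derivWithin (uniqueDiffWithinAt_Ioi 0)
    rw [h1] at h2
    exact h2.symm
  rw [hL1] at hlimL
  -- the map `x ↦ -x` sends `𝓝[<] 0` to `𝓝[>] 0`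
  have hnegmap : Tendsto (fun x : ℝ => -x) (𝓝[<] (0:ℝ)) (𝓝[>] (0:ℝ)) := by
    apply tendsto_nhdsWithin_of_tendsto_nhds_of_eventually_within
    · simpa using (continuous_neg.tendsto (0:ℝ)).mono_left nhdsWithin_le_nhds
    · filter_upwards [self_mem_nhdsWithin] with x hx
      simpa using hx
  -- `ψ` tends to `-1` at `0⁻`
  have hlimL' : Tendsto ψ (𝓝[<] (0:ℝ)) (𝓝 (-1)) := by
    have h1 : Tendsto (fun x : ℝ => -ψ (-x)) (𝓝[<] (0:ℝ)) (𝓝 (-1)) :=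
      (hlimL.comp hnegmap).neg
    exact h1.congr fun x => (hodd x).symm
  -- first derivative candidate
  set g : ℝ → ℝ := fun x => ψ x - (SignType.sign x : ℝ) with hgdef
  have hg0 : g 0 = 0 := by
    have h0 := hodd 0
    simp only [neg_zero] at h0
    have : ψ 0 = 0 := by linarith
    simp [hgdef, this]
  have hgr : Tendsto g (𝓝[>] (0:ℝ)) (𝓝 0) := by
    have h1 : Tendsto (fun x : ℝ => ψ x - 1) (𝓝[>] (0:ℝ)) (𝓝 (1 - 1)) := hlimL.sub_const 1
    rw [sub_self] at h1
    apply h1.congr'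
    filter_upwards [self_mem_nhdsWithin] with x hx
    simp [hgdef, sign_pos (mem_Ioi.1 hx)]
  have hgl : Tendsto g (𝓝[<] (0:ℝ)) (𝓝 0) := by
    have h1 : Tendsto (fun x : ℝ => ψ x + 1) (𝓝[<] (0:ℝ)) (𝓝 (-1 + 1)) := hlimL'.add_const 1
    rw [neg_add_cancel] at h1
    apply h1.congr'
    filter_upwards [self_mem_nhdsWithin] with x hx
    simp [hgdef, sign_neg (mem_Iio.1 hx), sub_eq_add_neg]
  have hgc0 : ContinuousAt g 0 := by
    have hne : Tendsto g (𝓝[≠] (0:ℝ)) (𝓝 0) := by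
      rw [← nhdsLT_sup_nhdsGT (0:ℝ)]
      exact tendsto_sup.2 ⟨hgl, hgr⟩
    have hpure : Tendsto g (pure (0:ℝ)) (𝓝 0) := by simpa [hg0] using tendsto_pure_nhds g 0
    have h3 : Tendsto g (𝓝[≠] (0:ℝ) ⊔ pure 0) (𝓝 0) := tendsto_sup.2 ⟨hne, hpure⟩
    rw [nhdsNE_sup_pure] at h3
    simpa [ContinuousAt, hg0] using h3
  -- `g` is the derivative of `s`
  have hg_ne : ∀ y : ℝ, y ≠ 0 → HasDerivAt (fun x : ℝ => φ x - |x|) (g y) y := fun y hy =>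
    (hD1 y hy).sub (hasDerivAt_abs hy)
  have hS : ∀ y : ℝ, HasDerivAt (fun x : ℝ => φ x - |x|) (g y) y :=
    hasDerivAt_of_hasDerivAt_of_ne' hg_ne (hcont.sub continuous_abs).continuousAt hgc0
  have hderiv_s : deriv (fun x : ℝ => φ x - |x|) = g := funext fun y => (hS y).deriv
  -- second derivative candidate
  set h : ℝ → ℝ := fun x => if x = 0 then -a else deriv ψ x with hhdef
  have hh_ne : ∀ y : ℝ, y ≠ 0 → HasDerivAt g (h y) y := by
    intro y hy
    have h1 : HasDerivAt (fun x : ℝ => ψ x - (SignType.sign y : ℝ)) (deriv ψ y) y :=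
      (hD2 y hy).sub_const _
    have heq : (fun x : ℝ => ψ x - (SignType.sign y : ℝ)) =ᶠ[𝓝 y] g := by
      rcases hy.lt_or_gt with hlt | hlt
      · filter_upwards [Iio_mem_nhds hlt] with x hx
        simp [hgdef, sign_neg (mem_Iio.1 hx), sign_neg hlt]
      · filter_upwards [Ioi_mem_nhds hlt] with x hx
        simp [hgdef, sign_pos (mem_Ioi.1 hx), sign_pos hlt]
    have h2 : HasDerivAt g (deriv ψ y) y := h1.congr_of_eventuallyEq heq.symm
    simpa [hhdef, if_neg hy] using h2
  have hhc0 : ContinuousAt h 0 := by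
    have hr : Tendsto h (𝓝[>] (0:ℝ)) (𝓝 (-a)) := by
      apply htend.congr'
      filter_upwards [self_mem_nhdsWithin] with x hx
      simp [hhdef, (ne_of_gt (mem_Ioi.1 hx))]
    have hdl : Tendsto (deriv ψ) (𝓝[<] (0:ℝ)) (𝓝 (-a)) := by
      have h1 : Tendsto (fun x : ℝ => deriv ψ (-x)) (𝓝[<] (0:ℝ)) (𝓝 (-a)) :=
        htend.comp hnegmap
      exact h1.congr fun x => (heven x).symm
    have hl : Tendsto h (𝓝[<] (0:ℝ)) (𝓝 (-a)) := by
      apply hdl.congr'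
      filter_upwards [self_mem_nhdsWithin] with x hx
      simp [hhdef, (ne_of_lt (mem_Iio.1 hx))]
    have hne : Tendsto h (𝓝[≠] (0:ℝ)) (𝓝 (-a)) := by
      rw [← nhdsLT_sup_nhdsGT (0:ℝ)]
      exact tendsto_sup.2 ⟨hl, hr⟩
    have hh0 : h 0 = -a := by simp [hhdef]
    have hpure : Tendsto h (pure (0:ℝ)) (𝓝 (-a)) := by simpa [hh0] using tendsto_pure_nhds h 0
    have h3 : Tendsto h (𝓝[≠] (0:ℝ) ⊔ pure 0) (𝓝 (-a)) := tendsto_sup.2 ⟨hne, hpure⟩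
    rw [nhdsNE_sup_pure] at h3
    simpa [ContinuousAt, hh0] using h3
  have hG : ∀ y : ℝ, HasDerivAt g (h y) y :=
    hasDerivAt_of_hasDerivAt_of_ne' hh_ne hgc0 hhc0
  have hderiv_g : deriv g = h := funext fun y => (hG y).deriv
  -- continuity of `h`
  have hhcont : Continuous h := by
    rw [continuous_iff_continuousAt]
    intro y
    rcases eq_or_ne y 0 with rfl | hy
    · exact hhc0
    · have hmem : {x : ℝ | x ≠ 0} ∈ 𝓝 y := isOpen_ne.mem_nhds hy
      have hca : ContinuousAt (deriv ψ) y := hC2.continuousAt hmem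
      apply hca.congr
      filter_upwards [hmem] with x hx
      simp [hhdef, hx]
  -- values of the second derivative
  have hvals : ∀ x : ℝ, -a ≤ h x ∧ h x ≤ 0 := by
    intro x
    rcases eq_or_ne x 0 with rfl | hx
    · simp [hhdef]; linarith
    · constructor
      · simpa [hhdef, hx] using hlb x hx
      · simpa [hhdef, hx] using hnp' x hx
  -- differentiability facts
  have hdiff_s : Differentiable ℝ (fun x : ℝ => φ x - |x|) := fun y => (hS y).differentiableAt
  have hdiff_g : Differentiable ℝ g := fun y => (hG y).differentiableAt
  refine ⟨?_, ?_, ?_⟩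
  · -- ContDiff
    have h2 : (2 : WithTop ℕ∞) = 1 + 1 := by norm_num
    rw [h2, contDiff_succ_iff_deriv]
    refine ⟨hdiff_s, by simp, ?_⟩
    rw [hderiv_s, contDiff_one_iff_deriv, hderiv_g]
    exact ⟨hdiff_g, hhcont⟩
  · -- Concave
    apply concaveOn_univ_of_deriv2_nonpos hdiff_s (by rw [hderiv_s]; exact hdiff_g)
    intro x
    have : deriv^[2] (fun x : ℝ => φ x - |x|) x
        = deriv (deriv (fun x : ℝ => φ x - |x|)) x := rfl
    rw [this, hderiv_s, hderiv_g]
    exact (hvals x).2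
  · intro x
    rw [hderiv_s, hderiv_g]
    exact hvals x
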